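/- Let X and Y be Banach spaces over 𝕂 (= ℝ or ℂ) and let T : X → Y be a bounded linear operator that quasi attains its norm. If the range T(X) is closed in Y and the kernel ker T is proximinal in X (for every x ∈ X there exists z ∈ ker T with ‖x − z‖ = dist(x, ker T)), then T attains its norm: there exists x₀ with ‖x₀‖ ≤ 1 and ‖T x₀‖ = ‖T‖. -/

import Mathlib

/-- a quasi norm attaining operator with closed range and proximinal kernel
attains its norm. -/
theorem quasi_attains_closed_range_proximinal_kernel_implies_attains
    {𝕜 X Y : Type*} [RCLike 𝕜]
    [NormedAddCommGroup X] [NormedSpace 𝕜 X] [CompleteSpace X]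
    [NormedAddCommGroup Y] [NormedSpace 𝕜 Y] [CompleteSpace Y]
    (T : X →L[𝕜] Y)
    (hQNA : ∃ u ∈ closure (⇑T '' Metric.closedBall 0 1), ‖u‖ = ‖T‖)
    (hrange : IsClosed (Set.range ⇑T))
    (hprox : ∀ x : X, ∃ z ∈ LinearMap.ker (T : X →ₗ[𝕜] Y),
      ‖x - z‖ = Metric.infDist x (LinearMap.ker (T : X →ₗ[𝕜] Y) : Set X)) :
    ∃ x₀ : X, ‖x₀‖ ≤ 1 ∧ ‖T x₀‖ = ‖T‖ := by
  obtain ⟨u, hu, hnorm⟩ := hQNA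
  have hur : u ∈ Set.range ⇑T := by
    have h1 : closure (⇑T '' Metric.closedBall 0 1) ⊆ closure (Set.range ⇑T) :=
      closure_mono (Set.image_subset_range _ _)
    rw [hrange.closure_eq] at h1
    exact h1 hu
  obtain ⟨x, hx⟩ := hur
  have hKc : ((LinearMap.range (T : X →ₗ[𝕜] Y) : Submodule 𝕜 Y) : Set Y) = Set.range ⇑T := by
    ext y; simp [LinearMap.mem_range]
  haveI : CompleteSpace (LinearMap.range (T : X →ₗ[𝕜] Y)) := by
    have hc : IsClosed ((LinearMap.range (T : X →ₗ[𝕜] Y) : Submodule 𝕜 Y) : Set Y) := by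
      rw [hKc]; exact hrange
    exact completeSpace_coe_iff_isComplete.2 hc.isComplete
  let T' : X →L[𝕜] (LinearMap.range (T : X →ₗ[𝕜] Y)) :=
    T.codRestrict _ (fun z => LinearMap.mem_range_self _ z)
  have hsurj : Function.Surjective T' := by
    rintro ⟨y, z, rfl⟩
    exact ⟨z, rfl⟩
  obtain ⟨C, hC, hCle⟩ := T'.exists_preimage_norm_le hsurj
  have hdist : Metric.infDist x (LinearMap.ker (T : X →ₗ[𝕜] Y) : Set X) ≤ 1 := by
    refine le_of_forall_pos_le_add (fun ε hε => ?_)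
    obtain ⟨v, hv, hvd⟩ := Metric.mem_closure_iff.1 hu (ε / C) (by positivity)
    obtain ⟨x₁, hx₁, rfl⟩ := hv
    obtain ⟨w, hw, hwle⟩ := hCle (T' x - T' x₁)
    have hker : x - x₁ - w ∈ LinearMap.ker (T : X →ₗ[𝕜] Y) := by
      have h2 : (T' w : Y) = ((T' x - T' x₁ : LinearMap.range (T : X →ₗ[𝕜] Y)) : Y) := by rw [hw]
      simp only [T', ContinuousLinearMap.coe_codRestrict_apply,
        AddSubgroupClass.coe_sub] at h2
      simp [LinearMap.mem_ker, map_sub, h2]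
    have h3 : Metric.infDist x (LinearMap.ker (T : X →ₗ[𝕜] Y) : Set X) ≤ ‖x₁ + w‖ := by
      have := Metric.infDist_le_dist_of_mem (x := x) hker
      rwa [dist_eq_norm, show x - (x - x₁ - w) = x₁ + w by abel] at this
    have hx₁n : ‖x₁‖ ≤ 1 := by
      simpa [Metric.mem_closedBall, dist_eq_norm] using hx₁
    have hwn : ‖w‖ ≤ ε := by
      have h4 : ‖T' x - T' x₁‖ = ‖u - T x₁‖ := by
        have : ((T' x - T' x₁ : LinearMap.range (T : X →ₗ[𝕜] Y)) : Y) = u - T x₁ := by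
          show T x - T x₁ = u - T x₁; rw [hx]
        rw [← this]; rfl
      have h5 : ‖u - T x₁‖ ≤ ε / C := by
        rw [dist_eq_norm] at hvd; exact le_of_lt hvd
      calc ‖w‖ ≤ C * ‖T' x - T' x₁‖ := hwle
        _ ≤ C * (ε / C) := by rw [h4]; exact mul_le_mul_of_nonneg_left h5 hC.le
        _ = ε := by field_simp
    calc Metric.infDist x (LinearMap.ker (T : X →ₗ[𝕜] Y) : Set X) ≤ ‖x₁ + w‖ := h3
      _ ≤ ‖x₁‖ + ‖w‖ := norm_add_le _ _
      _ ≤ 1 + ε := add_le_add hx₁n hwn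
  obtain ⟨z, hz, hze⟩ := hprox x
  refine ⟨x - z, by rw [hze]; exact hdist, ?_⟩
  have : T (x - z) = u := by
    rw [map_sub, show T z = 0 from LinearMap.mem_ker.1 hz, sub_zero, hx]
  rw [this, hnorm]
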